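/- Let n ≥ 1 be an integer, α ∈ [0,1), and let y ∈ (0,∞)^n satisfy y_1 ≤ y_2 ≤ … ≤ y_n. Let i* be the smallest index i ∈ {1,…,n} such that y_i·(1 − ((i−1)/n)·α) > (α/n)·Σ_{j=i}^n y_j. Define x ∈ ℝ^n by x_i = α/n for i < i*, and x_i = (1 − ((i*−1)/n)·α)·y_i / (Σ_{j=i*}^n y_j) for i ≥ i*. Then Σ_{i=1}^n x_i = 1 and x_i ≥ α/n for every i ∈ {1,…,n}; that is, x lies in the clipped simplex A_α. -/

import Mathlib

open Finset

/-- Unnormalized negative-entropy Bregman divergence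
`D(x‖y) = ∑ i, (x i * log (x i / y i) - x i + y i)` (with `0·log 0 = 0`,
which holds automatically since `Real.log 0 = 0`). -/
noncomputable def breg {n : ℕ} (x y : Fin n → ℝ) : ℝ :=
  ∑ i, (x i * Real.log (x i / y i) - x i + y i)

/-- The clipped simplex `A_α = {x : ∑ i, x i = 1 ∧ ∀ i, x i ≥ α / n}`. -/
def clippedSimplex (n : ℕ) (α : ℝ) : Set (Fin n → ℝ) :=
  {x | (∑ i, x i) = 1 ∧ ∀ i, α / n ≤ x i}
theorem stmt_3 (n : ℕ) (hn : 1 ≤ n) (α : ℝ) (hα : 0 ≤ α ∧ α < 1)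
    (y : Fin n → ℝ) (hypos : ∀ i, 0 < y i) (hymono : Monotone y)
    (istar : Fin n)
    (histar : IsLeast {i : Fin n |
      y i * (1 - ((i : ℕ) : ℝ) / n * α) > α / n * ∑ j ∈ Finset.Ici i, y j} istar)
    (x : Fin n → ℝ)
    (hx : ∀ i, x i = if i < istar then α / n
      else (1 - ((istar : ℕ) : ℝ) / n * α) * y i / ∑ j ∈ Finset.Ici istar, y j) :
    (∑ i, x i) = 1 ∧ ∀ i, α / n ≤ x i := by
  obtain ⟨hmem0, -⟩ := histar
  simp only [Set.mem_setOf_eq] at hmem0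
  set S := ∑ j ∈ Finset.Ici istar, y j with hS
  set c := 1 - ((istar : ℕ) : ℝ) / n * α with hc
  clear_value S c
  have hSpos : 0 < S := hS ▸ Finset.sum_pos (fun j _ => hypos j) ⟨istar, Finset.mem_Ici.2 le_rfl⟩
  have hmem : y istar * c > α / n * S := hmem0
  have hαn : 0 ≤ α / n := div_nonneg hα.1 (Nat.cast_nonneg n)
  have hcpos : 0 < c := by
    by_contra h
    push_neg at h
    have : y istar * c ≤ 0 := mul_nonpos_of_nonneg_of_nonpos (hypos istar).le h
    linarith [mul_nonneg hαn hSpos.le]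
  have key : ∀ i, istar ≤ i → α / n * S < c * y i := fun i hi => by
    calc α / n * S < y istar * c := hmem
    _ ≤ y i * c := by nlinarith [hymono hi, hcpos]
    _ = c * y i := mul_comm _ _
  constructor
  · have hsplit : (∑ i, x i) = ∑ i ∈ Finset.filter (· < istar) Finset.univ, (α / n)
        + ∑ i ∈ Finset.filter (fun i => ¬ i < istar) Finset.univ, c * y i / S := by
      rw [← Finset.sum_filter_add_sum_filter_not Finset.univ (· < istar)]
      congr 1 <;> apply Finset.sum_congr rfl <;> intro i hi <;>
        simp only [Finset.mem_filter] at hi <;> rw [hx i] <;> simp [hi.2]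
    have hfilt : Finset.filter (· < istar) Finset.univ = Finset.Iio istar := by
      ext i; simp
    have hfilt2 : Finset.filter (fun i => ¬ i < istar) Finset.univ = Finset.Ici istar := by
      ext i; simp [not_lt]
    rw [hsplit, hfilt, hfilt2, Finset.sum_const, Fin.card_Iio]
    have hsum2 : ∑ i ∈ Finset.Ici istar, c * y i / S = c := by
      rw [← Finset.sum_div, ← Finset.mul_sum, ← hS, mul_div_assoc,
        div_self hSpos.ne', mul_one]
    rw [hsum2, hc]
    ring
  · intro i
    rw [hx i]
    split
    · exact le_rfl
    · next h =>
      rw [not_lt] at h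
      rw [le_div_iff₀ hSpos]
      exact (key i h).le
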